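/- Let R be a commutative ring and m ≥ 2. If SL(m,R) = (U(m,R)·U⁻(m,R))^L for some L, then for every n ≥ m one has SL(n,R) = (U(n,R)·U⁻(n,R))^L, with the same number of factors. -/

import Mathlib

/-- Upper unitriangular square matrix. -/
def IsUpperUnitriangular {n : ℕ} {R : Type*} [CommRing R]
    (M : Matrix (Fin n) (Fin n) R) : Prop :=
  (∀ i, M i i = 1) ∧ ∀ i j : Fin n, j < i → M i j = 0

/-- Lower unitriangular square matrix. -/
def IsLowerUnitriangular {n : ℕ} {R : Type*} [CommRing R]
    (M : Matrix (Fin n) (Fin n) R) : Prop :=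
  (∀ i, M i i = 1) ∧ ∀ i j : Fin n, i < j → M i j = 0

namespace StabAux
open Matrix

variable {R : Type*} [CommRing R] {k n : ℕ}

lemma isUU_one : IsUpperUnitriangular (1 : Matrix (Fin k) (Fin k) R) :=
  ⟨fun i => Matrix.one_apply_eq i, fun _ _ h => Matrix.one_apply_ne (ne_of_gt h)⟩

lemma isLU_one : IsLowerUnitriangular (1 : Matrix (Fin k) (Fin k) R) :=
  ⟨fun i => Matrix.one_apply_eq i, fun _ _ h => Matrix.one_apply_ne (ne_of_lt h)⟩

lemma isUU_mul {A B : Matrix (Fin k) (Fin k) R}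
    (hA : IsUpperUnitriangular A) (hB : IsUpperUnitriangular B) :
    IsUpperUnitriangular (A * B) := by
  constructor
  · intro i
    rw [Matrix.mul_apply, Finset.sum_eq_single i]
    · rw [hA.1, hB.1, one_mul]
    · intro b _ hb
      rcases lt_or_gt_of_ne hb with h | h
      · rw [hA.2 i b h, zero_mul]
      · rw [hB.2 b i h, mul_zero]
    · intro h; exact absurd (Finset.mem_univ i) h
  · intro i j hji
    rw [Matrix.mul_apply]
    apply Finset.sum_eq_zero
    intro b _
    rcases lt_or_ge b i with h | h
    · rw [hA.2 i b h, zero_mul]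
    · rw [hB.2 b j (lt_of_lt_of_le hji h), mul_zero]

lemma isLU_mul {A B : Matrix (Fin k) (Fin k) R}
    (hA : IsLowerUnitriangular A) (hB : IsLowerUnitriangular B) :
    IsLowerUnitriangular (A * B) := by
  constructor
  · intro i
    rw [Matrix.mul_apply, Finset.sum_eq_single i]
    · rw [hA.1, hB.1, one_mul]
    · intro b _ hb
      rcases lt_or_gt_of_ne hb with h | h
      · rw [hB.2 b i h, mul_zero]
      · rw [hA.2 i b h, zero_mul]
    · intro h; exact absurd (Finset.mem_univ i) h
  · intro i j hij
    rw [Matrix.mul_apply]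
    apply Finset.sum_eq_zero
    intro b _
    rcases le_or_gt b i with h | h
    · rw [hB.2 b j (lt_of_le_of_lt h hij), mul_zero]
    · rw [hA.2 i b h, zero_mul]

/-- The set of elementary transvections. -/
def TS (k : ℕ) (R : Type*) [CommRing R] : Set (Matrix (Fin k) (Fin k) R) :=
  {M | ∃ (i j : Fin k) (ξ : R), i ≠ j ∧ M = 1 + Matrix.single i j ξ}

lemma tv_mem (i j : Fin k) (ξ : R) (h : i ≠ j) :
    1 + Matrix.single i j ξ ∈ Submonoid.closure (TS k R) :=
  Submonoid.subset_closure ⟨i, j, ξ, h, rfl⟩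

lemma tv_mul_tv (i j : Fin k) (ξ : R) (h : i ≠ j) :
    (1 + Matrix.single i j ξ) * (1 + Matrix.single i j (-ξ)) = 1 := by
  rw [mul_add, add_mul, add_mul, mul_one, one_mul,
    Matrix.single_mul_single_of_ne ξ i j _ (Ne.symm h)]
  rw [add_zero, mul_one, add_assoc, ← Matrix.single_add, add_neg_cancel]
  simp

lemma tv_isUU {i j : Fin k} (hij : i < j) (ξ : R) :
    IsUpperUnitriangular (1 + Matrix.single i j ξ) := by
  constructor
  · intro a
    rw [Matrix.add_apply, Matrix.one_apply_eq,
      Matrix.single_apply_of_ne _ _ _ _ _ (by rintro ⟨rfl, rfl⟩; exact absurd hij (lt_irrefl _)), add_zero]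
  · intro a b hba
    rw [Matrix.add_apply, Matrix.one_apply_ne (ne_of_gt hba),
      Matrix.single_apply_of_ne _ _ _ _ _ ?_, add_zero]
    rintro ⟨rfl, rfl⟩
    exact absurd hij (not_lt.mpr hba.le)

lemma tv_isLU {i j : Fin k} (hij : j < i) (ξ : R) :
    IsLowerUnitriangular (1 + Matrix.single i j ξ) := by
  constructor
  · intro a
    rw [Matrix.add_apply, Matrix.one_apply_eq,
      Matrix.single_apply_of_ne _ _ _ _ _ (by rintro ⟨rfl, rfl⟩; exact absurd hij (lt_irrefl _)), add_zero]
  · intro a b hab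
    rw [Matrix.add_apply, Matrix.one_apply_ne (ne_of_lt hab),
      Matrix.single_apply_of_ne _ _ _ _ _ ?_, add_zero]
    rintro ⟨rfl, rfl⟩
    exact absurd hij (not_lt.mpr hab.le)

lemma closure_inv {g : Matrix (Fin k) (Fin k) R} (hg : g ∈ Submonoid.closure (TS k R)) :
    ∃ w ∈ Submonoid.closure (TS k R), g * w = 1 ∧ w * g = 1 := by
  induction hg using Submonoid.closure_induction with
  | mem x hx =>
    obtain ⟨i, j, ξ, hij, rfl⟩ := hx
    exact ⟨1 + Matrix.single i j (-ξ), tv_mem i j (-ξ) hij,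
      tv_mul_tv i j ξ hij, by simpa using tv_mul_tv i j (-ξ) hij⟩
  | one => exact ⟨1, one_mem _, one_mul 1, one_mul 1⟩
  | mul x y hx hy ihx ihy =>
    obtain ⟨wx, hwx, hx1, hx2⟩ := ihx
    obtain ⟨wy, hwy, hy1, hy2⟩ := ihy
    refine ⟨wy * wx, mul_mem hwy hwx, ?_, ?_⟩
    · rw [mul_assoc, ← mul_assoc y, hy1, one_mul, hx1]
    · rw [mul_assoc, ← mul_assoc wx, hx2, one_mul, hy2]

lemma det_closure {g : Matrix (Fin k) (Fin k) R} (hg : g ∈ Submonoid.closure (TS k R)) :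
    g.det = 1 := by
  induction hg using Submonoid.closure_induction with
  | mem x hx =>
    obtain ⟨i, j, ξ, hij, rfl⟩ := hx
    rcases lt_or_gt_of_ne hij with h | h
    · have := tv_isUU h ξ
      rw [Matrix.det_of_upperTriangular (fun a b hba => this.2 a b hba)]
      simp [this.1]
    · have := tv_isLU h ξ
      rw [Matrix.det_of_lowerTriangular _ (fun a b hab => this.2 a b hab)]
      simp [this.1]
  | one => exact Matrix.det_one
  | mul x y _ _ ihx ihy => rw [Matrix.det_mul, ihx, ihy, one_mul]


/-! ### The corner embedding and the radicals -/

lemma cs_ne_last (i : Fin n) : i.castSucc ≠ Fin.last n := (Fin.castSucc_lt_last i).ne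

/-- Embedding of `n×n` matrices into the top-left corner of `(n+1)×(n+1)` matrices. -/
def sg (H : Matrix (Fin n) (Fin n) R) : Matrix (Fin (n+1)) (Fin (n+1)) R :=
  Matrix.of fun i j =>
    if hi : i = Fin.last n then (if j = Fin.last n then 1 else 0)
    else if hj : j = Fin.last n then 0
    else H (i.castPred hi) (j.castPred hj)

@[simp] lemma sg_cc (H : Matrix (Fin n) (Fin n) R) (i j : Fin n) :
    sg H i.castSucc j.castSucc = H i j := by
  simp [sg, cs_ne_last]

@[simp] lemma sg_ll (H : Matrix (Fin n) (Fin n) R) :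
    sg H (Fin.last n) (Fin.last n) = 1 := by simp [sg]

@[simp] lemma sg_cl (H : Matrix (Fin n) (Fin n) R) (i : Fin n) :
    sg H i.castSucc (Fin.last n) = 0 := by simp [sg, cs_ne_last]

@[simp] lemma sg_lc (H : Matrix (Fin n) (Fin n) R) (j : Fin n) :
    sg H (Fin.last n) j.castSucc = 0 := by simp [sg, cs_ne_last]

lemma sg_one : sg (1 : Matrix (Fin n) (Fin n) R) = 1 := by
  ext i j
  induction i using Fin.lastCases with
  | last =>
    induction j using Fin.lastCases with
    | last => simp
    | cast j => simp [Matrix.one_apply_ne (Ne.symm (cs_ne_last j))]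
  | cast i =>
    induction j using Fin.lastCases with
    | last => simp [Matrix.one_apply_ne (cs_ne_last i)]
    | cast j =>
      rcases eq_or_ne i j with rfl | hij
      · simp
      · simp [Matrix.one_apply_ne hij,
          Matrix.one_apply_ne (fun h => hij (Fin.castSucc_injective n h))]

lemma sg_mul (H K : Matrix (Fin n) (Fin n) R) : sg (H * K) = sg H * sg K := by
  ext i j
  induction i using Fin.lastCases with
  | last =>
    induction j using Fin.lastCases with
    | last => simp [Matrix.mul_apply, Fin.sum_univ_castSucc]
    | cast j => simp [Matrix.mul_apply, Fin.sum_univ_castSucc]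
  | cast i =>
    induction j using Fin.lastCases with
    | last => simp [Matrix.mul_apply, Fin.sum_univ_castSucc]
    | cast j => simp [Matrix.mul_apply, Fin.sum_univ_castSucc]

lemma sg_isUU {H : Matrix (Fin n) (Fin n) R} (h : IsUpperUnitriangular H) :
    IsUpperUnitriangular (sg H) := by
  constructor
  · intro i
    induction i using Fin.lastCases with
    | last => simp
    | cast i => simp [h.1]
  · intro i j hji
    induction i using Fin.lastCases with
    | last =>
      induction j using Fin.lastCases with
      | last => exact absurd hji (lt_irrefl _)
      | cast j => simp
    | cast i =>
      induction j using Fin.lastCases with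
      | last => exact absurd hji (not_lt.mpr (Fin.castSucc_lt_last i).le)
      | cast j =>
        rw [sg_cc]
        exact h.2 i j (by exact_mod_cast Fin.castSucc_lt_castSucc_iff.mp hji)

lemma sg_isLU {H : Matrix (Fin n) (Fin n) R} (h : IsLowerUnitriangular H) :
    IsLowerUnitriangular (sg H) := by
  constructor
  · intro i
    induction i using Fin.lastCases with
    | last => simp
    | cast i => simp [h.1]
  · intro i j hij
    induction j using Fin.lastCases with
    | last =>
      induction i using Fin.lastCases with
      | last => exact absurd hij (lt_irrefl _)
      | cast i => simp
    | cast j =>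
      induction i using Fin.lastCases with
      | last => exact absurd hij (not_lt.mpr (Fin.castSucc_lt_last j).le)
      | cast i =>
        rw [sg_cc]
        exact h.2 i j (by exact_mod_cast Fin.castSucc_lt_castSucc_iff.mp hij)

lemma sg_tv (i j : Fin n) (ξ : R) :
    sg (1 + Matrix.single i j ξ)
      = 1 + Matrix.single i.castSucc j.castSucc ξ := by
  ext a b
  induction a using Fin.lastCases with
  | last =>
    induction b using Fin.lastCases with
    | last =>
      rw [sg_ll, Matrix.add_apply, Matrix.one_apply_eq,
        Matrix.single_apply_of_ne _ _ _ _ _ (by rintro ⟨h, -⟩; exact cs_ne_last i h),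
        add_zero]
    | cast b =>
      rw [sg_lc, Matrix.add_apply, Matrix.one_apply_ne (Ne.symm (cs_ne_last b)),
        Matrix.single_apply_of_ne _ _ _ _ _ (by rintro ⟨h, -⟩; exact cs_ne_last i h),
        add_zero]
  | cast a =>
    induction b using Fin.lastCases with
    | last =>
      rw [sg_cl, Matrix.add_apply, Matrix.one_apply_ne (cs_ne_last a),
        Matrix.single_apply_of_ne _ _ _ _ _ (by rintro ⟨-, h⟩; exact cs_ne_last j h),
        add_zero]
    | cast b =>
      rw [sg_cc, Matrix.add_apply, Matrix.add_apply]
      congr 1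
      · rcases eq_or_ne a b with rfl | hab
        · simp
        · rw [Matrix.one_apply_ne hab,
            Matrix.one_apply_ne (fun h => hab (Fin.castSucc_injective n h))]
      · rcases (em (i = a ∧ j = b)) with ⟨rfl, rfl⟩ | hne
        · simp
        · rw [Matrix.single_apply_of_ne _ _ _ _ _ hne,
            Matrix.single_apply_of_ne _ _ _ _ _ (by
              rintro ⟨h1, h2⟩
              exact hne ⟨Fin.castSucc_injective n h1, Fin.castSucc_injective n h2⟩)]

lemma sg_mem {H : Matrix (Fin n) (Fin n) R} (h : H ∈ Submonoid.closure (TS n R)) :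
    sg H ∈ Submonoid.closure (TS (n+1) R) := by
  induction h using Submonoid.closure_induction with
  | mem x hx =>
    obtain ⟨i, j, ξ, hij, rfl⟩ := hx
    rw [sg_tv]
    exact tv_mem _ _ _ (fun h => hij (Fin.castSucc_injective n h))
  | one => rw [sg_one]; exact one_mem _
  | mul x y _ _ ihx ihy => rw [sg_mul]; exact mul_mem ihx ihy


/-! ### vecMulVec helpers -/

lemma vmv_mul (x y : Fin (n+1) → R) (M : Matrix (Fin (n+1)) (Fin (n+1)) R) :
    Matrix.vecMulVec x y * M = Matrix.vecMulVec x (y ᵥ* M) := by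
  ext i j
  simp [Matrix.mul_apply, Matrix.vecMulVec_apply, Matrix.vecMul, dotProduct,
    Finset.mul_sum, mul_assoc]

lemma mul_vmv (x y : Fin (n+1) → R) (M : Matrix (Fin (n+1)) (Fin (n+1)) R) :
    M * Matrix.vecMulVec x y = Matrix.vecMulVec (M *ᵥ x) y := by
  ext i j
  simp only [Matrix.mul_apply, Matrix.vecMulVec_apply, Matrix.mulVec, dotProduct,
    Finset.sum_mul, mul_assoc]

/-- the last standard basis vector -/
def el : Fin (n+1) → R := Pi.single (Fin.last n) 1

@[simp] lemma el_cs (i : Fin n) : el (R := R) i.castSucc = 0 :=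
  Pi.single_eq_of_ne (cs_ne_last i) 1

@[simp] lemma el_l : el (R := R) (Fin.last n) = 1 := Pi.single_eq_same _ _

@[simp] lemma single_last_cs (i : Fin n) :
    (Pi.single (Fin.last n) (1 : R) : Fin (n+1) → R) i.castSucc = 0 :=
  Pi.single_eq_of_ne (cs_ne_last i) 1

lemma vmv_zero_right (x : Fin (n+1) → R) :
    Matrix.vecMulVec x (0 : Fin (n+1) → R) = 0 := by
  ext i j; simp [Matrix.vecMulVec_apply]

lemma vmv_zero_left (y : Fin (n+1) → R) :
    Matrix.vecMulVec (0 : Fin (n+1) → R) y = 0 := by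
  ext i j; simp [Matrix.vecMulVec_apply]

@[simp] lemma snoc_vec_last (c : Fin n → R) : (Fin.snoc c 0 : Fin (n+1) → R) (Fin.last n) = 0 :=
  Fin.snoc_last _ _

@[simp] lemma snoc_vec_cs (c : Fin n → R) (i : Fin n) :
    (Fin.snoc c 0 : Fin (n+1) → R) i.castSucc = c i := Fin.snoc_castSucc _ _ _

lemma el_vecMul_sg (H : Matrix (Fin n) (Fin n) R) : el ᵥ* sg H = el := by
  funext j
  induction j using Fin.lastCases with
  | last => simp [Matrix.vecMul, dotProduct, Fin.sum_univ_castSucc, el]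
  | cast j => simp [Matrix.vecMul, dotProduct, Fin.sum_univ_castSucc, el]

lemma sg_mulVec_el (H : Matrix (Fin n) (Fin n) R) : sg H *ᵥ el = el := by
  funext i
  induction i using Fin.lastCases with
  | last => simp [Matrix.mulVec, dotProduct, Fin.sum_univ_castSucc, el]
  | cast i => simp [Matrix.mulVec, dotProduct, Fin.sum_univ_castSucc, el]

lemma sg_mulVec_snoc (H : Matrix (Fin n) (Fin n) R) (c : Fin n → R) :
    sg H *ᵥ (Fin.snoc c 0) = Fin.snoc (H *ᵥ c) 0 := by
  funext i
  induction i using Fin.lastCases with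
  | last => simp [Matrix.mulVec, dotProduct, Fin.sum_univ_castSucc]
  | cast i => simp [Matrix.mulVec, dotProduct, Fin.sum_univ_castSucc]

lemma snoc_vecMul_sg (H : Matrix (Fin n) (Fin n) R) (r : Fin n → R) :
    (Fin.snoc r 0 : Fin (n+1) → R) ᵥ* sg H = Fin.snoc (r ᵥ* H) 0 := by
  funext j
  induction j using Fin.lastCases with
  | last => simp [Matrix.vecMul, dotProduct, Fin.sum_univ_castSucc]
  | cast j => simp [Matrix.vecMul, dotProduct, Fin.sum_univ_castSucc]

lemma snoc_add (c c' : Fin n → R) :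
    (Fin.snoc c 0 : Fin (n+1) → R) + Fin.snoc c' 0 = Fin.snoc (c + c') 0 := by
  funext i
  induction i using Fin.lastCases with
  | last => simp
  | cast i => simp

lemma snoc_zero_vec : (Fin.snoc (0 : Fin n → R) 0 : Fin (n+1) → R) = 0 := by
  funext i
  induction i using Fin.lastCases with
  | last => simp
  | cast i => simp

/-! ### Radicals -/

/-- last-column radical element -/
def Av (c : Fin n → R) : Matrix (Fin (n+1)) (Fin (n+1)) R :=
  1 + Matrix.vecMulVec (Fin.snoc c 0) el

/-- last-row radical element -/
def Bv (r : Fin n → R) : Matrix (Fin (n+1)) (Fin (n+1)) R :=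
  1 + Matrix.vecMulVec el (Fin.snoc r 0)

lemma Av_isUU (c : Fin n → R) : IsUpperUnitriangular (Av c) := by
  constructor
  · intro i
    rw [Av, Matrix.add_apply, Matrix.one_apply_eq, Matrix.vecMulVec_apply]
    induction i using Fin.lastCases with
    | last => simp
    | cast i => simp
  · intro i j hji
    rw [Av, Matrix.add_apply, Matrix.one_apply_ne (ne_of_gt hji), Matrix.vecMulVec_apply]
    induction j using Fin.lastCases with
    | last => exact absurd hji (not_lt.mpr (Fin.le_last i))
    | cast j => simp

lemma Bv_isLU (r : Fin n → R) : IsLowerUnitriangular (Bv r) := by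
  constructor
  · intro i
    rw [Bv, Matrix.add_apply, Matrix.one_apply_eq, Matrix.vecMulVec_apply]
    induction i using Fin.lastCases with
    | last => simp
    | cast i => simp
  · intro i j hij
    rw [Bv, Matrix.add_apply, Matrix.one_apply_ne (ne_of_lt hij), Matrix.vecMulVec_apply]
    induction i using Fin.lastCases with
    | last => exact absurd hij (not_lt.mpr (Fin.le_last j))
    | cast i => simp

lemma elvmv_zero (c : Fin n → R) :
    (el : Fin (n+1) → R) ᵥ* Matrix.vecMulVec (Fin.snoc c 0) (el : Fin (n+1) → R) = 0 := by
  funext j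
  simp [Matrix.vecMul, dotProduct, Matrix.vecMulVec_apply, Fin.sum_univ_castSucc, el]

lemma snocvmv_zero (r r' : Fin n → R) :
    (Fin.snoc r 0 : Fin (n+1) → R) ᵥ* Matrix.vecMulVec (el : Fin (n+1) → R) (Fin.snoc r' 0) = 0 := by
  funext j
  simp [Matrix.vecMul, dotProduct, Matrix.vecMulVec_apply, Fin.sum_univ_castSucc, el]

lemma vmv_snoc_el_add (c c' : Fin n → R) :
    Matrix.vecMulVec (Fin.snoc c 0) (el : Fin (n+1) → R)
      + Matrix.vecMulVec (Fin.snoc c' 0) (el : Fin (n+1) → R)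
      = Matrix.vecMulVec (Fin.snoc (c + c') 0) (el : Fin (n+1) → R) := by
  ext i j
  rw [Matrix.add_apply, Matrix.vecMulVec_apply, Matrix.vecMulVec_apply, Matrix.vecMulVec_apply,
    ← add_mul]
  congr 1
  induction i using Fin.lastCases with
  | last => simp
  | cast i => simp

lemma vmv_el_snoc_add (r r' : Fin n → R) :
    Matrix.vecMulVec (el : Fin (n+1) → R) (Fin.snoc r 0)
      + Matrix.vecMulVec (el : Fin (n+1) → R) (Fin.snoc r' 0)
      = Matrix.vecMulVec (el : Fin (n+1) → R) (Fin.snoc (r + r') 0) := by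
  ext i j
  rw [Matrix.add_apply, Matrix.vecMulVec_apply, Matrix.vecMulVec_apply, Matrix.vecMulVec_apply,
    ← mul_add]
  congr 1
  induction j using Fin.lastCases with
  | last => simp
  | cast j => simp

lemma Av_mul_Av (c c' : Fin n → R) : Av c * Av c' = Av (c + c') := by
  rw [Av, Av, Av, mul_add, mul_one, add_mul, one_mul, vmv_mul, elvmv_zero, vmv_zero_right,
    add_zero, add_assoc, vmv_snoc_el_add]

lemma Av_zero : Av (0 : Fin n → R) = 1 := by
  rw [Av, snoc_zero_vec]
  ext i j
  simp [Matrix.add_apply, Matrix.vecMulVec_apply]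

lemma Bv_mul_Bv (r r' : Fin n → R) : Bv r * Bv r' = Bv (r + r') := by
  rw [Bv, Bv, Bv, mul_add, mul_one, add_mul, one_mul, vmv_mul, snocvmv_zero, vmv_zero_right,
    add_zero, add_assoc, vmv_el_snoc_add]

lemma Bv_zero : Bv (0 : Fin n → R) = 1 := by
  rw [Bv, snoc_zero_vec]
  ext i j
  simp [Matrix.add_apply, Matrix.vecMulVec_apply]

/-- move `sg` right past an `Av` -/
lemma M1 (h : Matrix (Fin n) (Fin n) R) (c : Fin n → R) :
    sg h * Av c = Av (h *ᵥ c) * sg h := by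
  rw [Av, Av, mul_add, mul_one, add_mul, one_mul, mul_vmv, sg_mulVec_snoc, vmv_mul,
    el_vecMul_sg]

/-- move `Bv` right past an `sg` -/
lemma M2 (h : Matrix (Fin n) (Fin n) R) (r : Fin n → R) :
    Bv r * sg h = sg h * Bv (r ᵥ* h) := by
  rw [Bv, Bv, add_mul, one_mul, mul_add, mul_one, vmv_mul, snoc_vecMul_sg, mul_vmv,
    sg_mulVec_el]


/-! ### Decompositions -/

lemma decompU {u : Matrix (Fin (n+1)) (Fin (n+1)) R} (hu : IsUpperUnitriangular u) :
    ∃ (c : Fin n → R) (ut : Matrix (Fin n) (Fin n) R),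
      IsUpperUnitriangular ut ∧ u = Av c * sg ut := by
  refine ⟨fun i => u i.castSucc (Fin.last n),
    Matrix.of (fun i j => u i.castSucc j.castSucc), ⟨fun i => hu.1 _, fun i j hji => hu.2 _ _ ?_⟩, ?_⟩
  · exact Fin.castSucc_lt_castSucc_iff.mpr hji
  · rw [Av, add_mul, one_mul, vmv_mul, el_vecMul_sg]
    ext i j
    rw [Matrix.add_apply, Matrix.vecMulVec_apply]
    induction i using Fin.lastCases with
    | last =>
      induction j using Fin.lastCases with
      | last => simp [hu.1]
      | cast j => simp [hu.2 (Fin.last n) j.castSucc (Fin.castSucc_lt_last j)]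
    | cast i =>
      induction j using Fin.lastCases with
      | last => simp
      | cast j => simp

lemma decompL0 {v : Matrix (Fin (n+1)) (Fin (n+1)) R} (hv : IsLowerUnitriangular v) :
    ∃ (r : Fin n → R) (vt : Matrix (Fin n) (Fin n) R),
      IsLowerUnitriangular vt ∧ v = sg vt * Bv r := by
  refine ⟨fun j => v (Fin.last n) j.castSucc,
    Matrix.of (fun i j => v i.castSucc j.castSucc), ⟨fun i => hv.1 _, fun i j hij => hv.2 _ _ ?_⟩, ?_⟩
  · exact Fin.castSucc_lt_castSucc_iff.mpr hij
  · rw [Bv, mul_add, mul_one, mul_vmv, sg_mulVec_el]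
    ext i j
    rw [Matrix.add_apply, Matrix.vecMulVec_apply]
    induction i using Fin.lastCases with
    | last =>
      induction j using Fin.lastCases with
      | last => simp [hv.1]
      | cast j => simp
    | cast i =>
      induction j using Fin.lastCases with
      | last => simp [hv.2 i.castSucc (Fin.last n) (Fin.castSucc_lt_last i)]
      | cast j => simp

lemma invU : ∀ {k : ℕ} {u : Matrix (Fin k) (Fin k) R}, IsUpperUnitriangular u →
    ∃ w, IsUpperUnitriangular w ∧ u * w = 1 ∧ w * u = 1 := by
  intro k
  induction k with
  | zero =>
    intro u _
    refine ⟨1, isUU_one, ?_, ?_⟩ <;> · ext i j; exact i.elim0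
  | succ k ih =>
    intro u hu
    obtain ⟨c, ut, hut, rfl⟩ := decompU hu
    obtain ⟨wt, hwt, hw1, hw2⟩ := ih hut
    refine ⟨sg wt * Av (-c), isUU_mul (sg_isUU hwt) (Av_isUU _), ?_, ?_⟩
    · rw [mul_assoc, ← mul_assoc (sg ut), ← sg_mul, hw1, sg_one, one_mul, Av_mul_Av,
        add_neg_cancel, Av_zero]
    · rw [mul_assoc, ← mul_assoc (Av (-c)), Av_mul_Av, neg_add_cancel, Av_zero, one_mul,
        ← sg_mul, hw2, sg_one]

lemma invL : ∀ {k : ℕ} {v : Matrix (Fin k) (Fin k) R}, IsLowerUnitriangular v →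
    ∃ w, IsLowerUnitriangular w ∧ v * w = 1 ∧ w * v = 1 := by
  intro k
  induction k with
  | zero =>
    intro v _
    refine ⟨1, isLU_one, ?_, ?_⟩ <;> · ext i j; exact i.elim0
  | succ k ih =>
    intro v hv
    obtain ⟨r, vt, hvt, rfl⟩ := decompL0 hv
    obtain ⟨wt, hwt, hw1, hw2⟩ := ih hvt
    refine ⟨Bv (-r) * sg wt, isLU_mul (Bv_isLU _) (sg_isLU hwt), ?_, ?_⟩
    · rw [mul_assoc, ← mul_assoc (Bv r), Bv_mul_Bv, add_neg_cancel, Bv_zero, one_mul,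
        ← sg_mul, hw1, sg_one]
    · rw [mul_assoc, ← mul_assoc (sg wt), ← sg_mul, hw2, sg_one, one_mul, Bv_mul_Bv,
        neg_add_cancel, Bv_zero]

/-- radical-first decomposition of a lower unitriangular matrix -/
lemma decompL {v : Matrix (Fin (n+1)) (Fin (n+1)) R} (hv : IsLowerUnitriangular v) :
    ∃ (r : Fin n → R) (vt : Matrix (Fin n) (Fin n) R),
      IsLowerUnitriangular vt ∧ v = Bv r * sg vt := by
  obtain ⟨r0, vt, hvt, rfl⟩ := decompL0 hv
  obtain ⟨wt, hwt, hw1, hw2⟩ := invL hvt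
  refine ⟨r0 ᵥ* wt, vt, hvt, ?_⟩
  rw [M2, Matrix.vecMul_vecMul, hw2, Matrix.vecMul_one]

/-- move `sg h` right past a `Bv`, given an inverse of `h` -/
lemma SWAPr {h w : Matrix (Fin n) (Fin n) R} (hw : w * h = 1) (r : Fin n → R) :
    sg h * Bv r = Bv (r ᵥ* w) * sg h := by
  rw [M2, Matrix.vecMul_vecMul, hw, Matrix.vecMul_one]

/-- move `Av` right past an `sg h`, given an inverse of `h` -/
lemma SWAPl {h w : Matrix (Fin n) (Fin n) R} (hw : h * w = 1) (c : Fin n → R) :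
    Av c * sg h = sg h * Av (w *ᵥ c) := by
  rw [M1, Matrix.mulVec_mulVec, hw, Matrix.one_mulVec]

/-! ### Unitriangular matrices are products of transvections -/

lemma Av_repr (c : Fin n → R) :
    Av c = 1 + ∑ i : Fin n, Matrix.single i.castSucc (Fin.last n) (c i) := by
  rw [Av]
  congr 1
  ext a b
  rw [Matrix.vecMulVec_apply, Matrix.sum_apply]
  induction a using Fin.lastCases with
  | last =>
    rw [snoc_vec_last, zero_mul]
    refine (Finset.sum_eq_zero ?_).symm
    intro i _
    exact Matrix.single_apply_of_ne _ _ _ _ _ (by rintro ⟨h, -⟩; exact cs_ne_last i h)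
  | cast a =>
    induction b using Fin.lastCases with
    | last =>
      rw [snoc_vec_cs, el_l, mul_one, Finset.sum_eq_single a]
      · simp
      · intro b _ hb
        exact Matrix.single_apply_of_ne _ _ _ _ _
          (by rintro ⟨h, -⟩; exact hb (Fin.castSucc_injective n h.symm).symm)
      · intro h; exact absurd (Finset.mem_univ a) h
    | cast b =>
      rw [el_cs, mul_zero]
      refine (Finset.sum_eq_zero ?_).symm
      intro i _
      exact Matrix.single_apply_of_ne _ _ _ _ _ (by rintro ⟨-, h⟩; exact cs_ne_last b h.symm)

lemma Bv_repr (r : Fin n → R) :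
    Bv r = 1 + ∑ j : Fin n, Matrix.single (Fin.last n) j.castSucc (r j) := by
  rw [Bv]
  congr 1
  ext a b
  rw [Matrix.vecMulVec_apply, Matrix.sum_apply]
  induction b using Fin.lastCases with
  | last =>
    rw [snoc_vec_last, mul_zero]
    refine (Finset.sum_eq_zero ?_).symm
    intro j _
    exact Matrix.single_apply_of_ne _ _ _ _ _ (by rintro ⟨-, h⟩; exact cs_ne_last j h)
  | cast b =>
    induction a using Fin.lastCases with
    | last =>
      rw [snoc_vec_cs, el_l, one_mul, Finset.sum_eq_single b]
      · simp
      · intro a _ ha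
        exact Matrix.single_apply_of_ne _ _ _ _ _
          (by rintro ⟨-, h⟩; exact ha (Fin.castSucc_injective n h.symm).symm)
      · intro h; exact absurd (Finset.mem_univ b) h
    | cast a =>
      rw [el_cs, zero_mul]
      refine (Finset.sum_eq_zero ?_).symm
      intro j _
      exact Matrix.single_apply_of_ne _ _ _ _ _ (by rintro ⟨h, -⟩; exact cs_ne_last a h.symm)

lemma sum_tv_mem_col (c : Fin n → R) (s : Finset (Fin n)) :
    1 + ∑ i ∈ s, Matrix.single i.castSucc (Fin.last n) (c i)
      ∈ Submonoid.closure (TS (n+1) R) := by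
  induction s using Finset.induction_on with
  | empty => simpa using one_mem _
  | @insert a s ha ih =>
    have hz : ∀ i ∈ s, Matrix.single a.castSucc (Fin.last n) (c a) *
        Matrix.single i.castSucc (Fin.last n) (c i) = 0 := fun i _ =>
      Matrix.single_mul_single_of_ne _ _ _ _ (Ne.symm (cs_ne_last i)) _
    have key : (1 + Matrix.single a.castSucc (Fin.last n) (c a)) *
        (1 + ∑ i ∈ s, Matrix.single i.castSucc (Fin.last n) (c i))
        = 1 + ∑ i ∈ insert a s, Matrix.single i.castSucc (Fin.last n) (c i) := by
      rw [mul_add, mul_one, add_mul, one_mul, Finset.mul_sum, Finset.sum_eq_zero hz,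
        add_zero, Finset.sum_insert ha]
      abel
    rw [← key]
    exact mul_mem (tv_mem _ _ _ (cs_ne_last a)) ih

lemma Av_mem (c : Fin n → R) : Av c ∈ Submonoid.closure (TS (n+1) R) := by
  rw [Av_repr]; exact sum_tv_mem_col c Finset.univ

lemma sum_tv_mem_row (r : Fin n → R) (s : Finset (Fin n)) :
    1 + ∑ j ∈ s, Matrix.single (Fin.last n) j.castSucc (r j)
      ∈ Submonoid.closure (TS (n+1) R) := by
  induction s using Finset.induction_on with
  | empty => simpa using one_mem _
  | @insert a s ha ih =>
    have hz : ∀ j ∈ s, Matrix.single (Fin.last n) a.castSucc (r a) *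
        Matrix.single (Fin.last n) j.castSucc (r j) = 0 := fun j _ =>
      Matrix.single_mul_single_of_ne _ _ _ _ (cs_ne_last a) _
    have key : (1 + Matrix.single (Fin.last n) a.castSucc (r a)) *
        (1 + ∑ j ∈ s, Matrix.single (Fin.last n) j.castSucc (r j))
        = 1 + ∑ j ∈ insert a s, Matrix.single (Fin.last n) j.castSucc (r j) := by
      rw [mul_add, mul_one, add_mul, one_mul, Finset.mul_sum, Finset.sum_eq_zero hz,
        add_zero, Finset.sum_insert ha]
      abel
    rw [← key]
    exact mul_mem (tv_mem _ _ _ (Ne.symm (cs_ne_last a))) ih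

lemma Bv_mem (r : Fin n → R) : Bv r ∈ Submonoid.closure (TS (n+1) R) := by
  rw [Bv_repr]; exact sum_tv_mem_row r Finset.univ

lemma gaussU : ∀ {k : ℕ} {u : Matrix (Fin k) (Fin k) R}, IsUpperUnitriangular u →
    u ∈ Submonoid.closure (TS k R) := by
  intro k
  induction k with
  | zero =>
    intro u _
    have : u = 1 := by ext i j; exact i.elim0
    rw [this]; exact one_mem _
  | succ k ih =>
    intro u hu
    obtain ⟨c, ut, hut, rfl⟩ := decompU hu
    exact mul_mem (Av_mem c) (sg_mem (ih hut))

lemma gaussL : ∀ {k : ℕ} {v : Matrix (Fin k) (Fin k) R}, IsLowerUnitriangular v →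
    v ∈ Submonoid.closure (TS k R) := by
  intro k
  induction k with
  | zero =>
    intro v _
    have : v = 1 := by ext i j; exact i.elim0
    rw [this]; exact one_mem _
  | succ k ih =>
    intro v hv
    obtain ⟨r, vt, hvt, rfl⟩ := decompL hv
    exact mul_mem (Bv_mem r) (sg_mem (ih hvt))


/-! ### Product sets -/

lemma reassoc {M : Type*} [Monoid M] {a b b' a' : M} (h : a * b = b' * a') (z : M) :
    a * (b * z) = b' * (a' * z) := by rw [← mul_assoc, h, mul_assoc]

/-- `
(U·U⁻)^L` as a recursively defined set. -/
def Yset (R : Type*) [CommRing R] (k : ℕ) : ℕ → Set (Matrix (Fin k) (Fin k) R)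
  | 0 => {1}
  | (L+1) => {g | ∃ u v y, IsUpperUnitriangular u ∧ IsLowerUnitriangular v ∧
      y ∈ Yset R k L ∧ g = u * (v * y)}

/-- strings of radical pairs -/
def ARset (R : Type*) [CommRing R] (n : ℕ) : ℕ → Set (Matrix (Fin (n+1)) (Fin (n+1)) R)
  | 0 => {1}
  | (k+1) => {g | ∃ c r y, y ∈ ARset R n k ∧ g = Av c * (Bv r * y)}

/-- strings of embedded unitriangular pairs -/
def Zset (R : Type*) [CommRing R] (n : ℕ) : ℕ → Set (Matrix (Fin (n+1)) (Fin (n+1)) R)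
  | 0 => {1}
  | (k+1) => {g | ∃ f g' z, IsUpperUnitriangular f ∧ IsLowerUnitriangular g' ∧
      z ∈ Zset R n k ∧ g = sg f * (sg g' * z)}

lemma one_Yset : ∀ L, (1 : Matrix (Fin k) (Fin k) R) ∈ Yset R k L := by
  intro L
  induction L with
  | zero => exact rfl
  | succ L ih =>
    exact ⟨1, 1, 1, isUU_one, isLU_one, ih, by rw [one_mul, one_mul]⟩

lemma Yset_sub_closure : ∀ {L} {y : Matrix (Fin k) (Fin k) R},
    y ∈ Yset R k L → y ∈ Submonoid.closure (TS k R) := by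
  intro L
  induction L with
  | zero => intro y hy; rw [show y = 1 from hy]; exact one_mem _
  | succ L ih =>
    rintro y ⟨u, v, y₁, hu, hv, hy₁, rfl⟩
    exact mul_mem (gaussU hu) (mul_mem (gaussL hv) (ih hy₁))

lemma leftU {L : ℕ} (hL : L ≠ 0) {x y : Matrix (Fin k) (Fin k) R}
    (hx : IsUpperUnitriangular x) (hy : y ∈ Yset R k L) : x * y ∈ Yset R k L := by
  obtain ⟨L, rfl⟩ : ∃ L', L = L' + 1 := ⟨L - 1, (Nat.succ_pred_eq_of_ne_zero hL).symm⟩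
  obtain ⟨u, v, y₁, hu, hv, hy₁, rfl⟩ := hy
  exact ⟨x * u, v, y₁, isUU_mul hx hu, hv, hy₁, by rw [mul_assoc]⟩

lemma rightL : ∀ {L : ℕ}, L ≠ 0 → ∀ {x y : Matrix (Fin k) (Fin k) R},
    IsLowerUnitriangular x → y ∈ Yset R k L → y * x ∈ Yset R k L := by
  intro L
  induction L with
  | zero => intro h; exact absurd rfl h
  | succ L ih =>
    rintro - x y hx ⟨u, v, y₁, hu, hv, hy₁, rfl⟩
    rcases Nat.eq_zero_or_pos L with rfl | hL
    · rw [show y₁ = 1 from hy₁]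
      exact ⟨u, v * x, 1, hu, isLU_mul hv hx, rfl, by
        rw [mul_one, mul_one, mul_assoc]⟩
    · refine ⟨u, v, y₁ * x, hu, hv, ih (Nat.pos_iff_ne_zero.mp hL) hx hy₁, by
        rw [mul_assoc, mul_assoc]⟩

lemma PASSr {h w : Matrix (Fin n) (Fin n) R} (hw : w * h = 1) :
    ∀ {k} {y : Matrix (Fin (n+1)) (Fin (n+1)) R}, y ∈ ARset R n k →
      ∃ y' ∈ ARset R n k, sg h * y = y' * sg h := by
  intro k
  induction k with
  | zero =>
    intro y hy
    exact ⟨1, rfl, by rw [show y = 1 from hy, mul_one, one_mul]⟩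
  | succ k ih =>
    rintro y ⟨c, r, y₁, hy₁, rfl⟩
    obtain ⟨y₁', hy₁', key⟩ := ih hy₁
    refine ⟨Av (h *ᵥ c) * (Bv (r ᵥ* w) * y₁'), ⟨_, _, _, hy₁', rfl⟩, ?_⟩
    rw [reassoc (M1 h c), reassoc (SWAPr hw r), key, ← mul_assoc, ← mul_assoc, ← mul_assoc,
      mul_assoc (Av (h *ᵥ c))]

lemma PASSl {h w : Matrix (Fin n) (Fin n) R} (hw : h * w = 1) :
    ∀ {k} {y : Matrix (Fin (n+1)) (Fin (n+1)) R}, y ∈ ARset R n k →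
      ∃ y' ∈ ARset R n k, y * sg h = sg h * y' := by
  intro k
  induction k with
  | zero =>
    intro y hy
    exact ⟨1, rfl, by rw [show y = 1 from hy, mul_one, one_mul]⟩
  | succ k ih =>
    rintro y ⟨c, r, y₁, hy₁, rfl⟩
    obtain ⟨y₁', hy₁', key⟩ := ih hy₁
    refine ⟨Av (w *ᵥ c) * (Bv (r ᵥ* h) * y₁'), ⟨_, _, _, hy₁', rfl⟩, ?_⟩
    rw [mul_assoc, mul_assoc, key, ← mul_assoc (Bv r), M2, mul_assoc, ← mul_assoc (Av c),
      SWAPl hw, mul_assoc, ← mul_assoc, ← mul_assoc, mul_assoc (sg h) (Av (w *ᵥ c))]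

lemma extract : ∀ {L} {g : Matrix (Fin (n+1)) (Fin (n+1)) R}, g ∈ Yset R (n+1) L →
    ∃ y H, y ∈ ARset R n L ∧ H ∈ Submonoid.closure (TS n R) ∧ g = y * sg H := by
  intro L
  induction L with
  | zero =>
    intro g hg
    exact ⟨1, 1, rfl, one_mem _, by rw [show g = 1 from hg, sg_one, one_mul]⟩
  | succ L ih =>
    rintro g ⟨u, v, y₁, hu, hv, hy₁, rfl⟩
    obtain ⟨y₂, H₂, hy₂, hH₂, rfl⟩ := ih hy₁
    obtain ⟨c, ut, hut, rfl⟩ := decompU hu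
    obtain ⟨r, vt, hvt, rfl⟩ := decompL hv
    obtain ⟨wu, hwu, hwu1, hwu2⟩ := invU hut
    obtain ⟨wv, hwv, hwv1, hwv2⟩ := invL hvt
    have hinv : (wv * wu) * (ut * vt) = 1 := by
      rw [mul_assoc, ← mul_assoc wu, hwu2, one_mul, hwv2]
    obtain ⟨y₂', hy₂', key⟩ := PASSr hinv hy₂
    refine ⟨Av c * (Bv (r ᵥ* wu) * y₂'), ut * (vt * H₂),
      ⟨_, _, _, hy₂', rfl⟩, mul_mem (gaussU hut) (mul_mem (gaussL hvt) hH₂), ?_⟩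
    calc Av c * sg ut * (Bv r * sg vt * (y₂ * sg H₂))
        = Av c * (sg ut * (Bv r * (sg vt * (y₂ * sg H₂)))) := by
          rw [mul_assoc, mul_assoc (Bv r)]
      _ = Av c * (Bv (r ᵥ* wu) * (sg ut * (sg vt * (y₂ * sg H₂)))) := by
          rw [reassoc (SWAPr hwu2 r)]
      _ = Av c * (Bv (r ᵥ* wu) * (sg (ut * vt) * (y₂ * sg H₂))) := by
          rw [← mul_assoc (sg ut), ← sg_mul]
      _ = Av c * (Bv (r ᵥ* wu) * (y₂' * (sg (ut * vt) * sg H₂))) := by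
          rw [reassoc key]
      _ = Av c * (Bv (r ᵥ* wu) * y₂') * sg (ut * (vt * H₂)) := by
          rw [← sg_mul, mul_assoc ut vt H₂]
          simp only [mul_assoc]

lemma interleave : ∀ {k} {y z : Matrix (Fin (n+1)) (Fin (n+1)) R},
    y ∈ ARset R n k → z ∈ Zset R n k → y * z ∈ Yset R (n+1) k := by
  intro k
  induction k with
  | zero =>
    intro y z hy hz
    rw [show y = 1 from hy, show z = 1 from hz, one_mul]
    exact rfl
  | succ k ih =>
    rintro y z ⟨c, r, y₁, hy₁, rfl⟩ ⟨f, g', z₁, hf, hg', hz₁, rfl⟩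
    obtain ⟨wf, hwf, hwf1, hwf2⟩ := invU hf
    obtain ⟨wg, hwg, hwg1, hwg2⟩ := invL hg'
    obtain ⟨y₂, hy₂, key₂⟩ := PASSl hwf1 hy₁
    obtain ⟨y₃, hy₃, key₃⟩ := PASSl hwg1 hy₂
    refine ⟨Av c * sg f, Bv (r ᵥ* f) * sg g', y₃ * z₁,
      isUU_mul (Av_isUU c) (sg_isUU hf), isLU_mul (Bv_isLU _) (sg_isLU hg'),
      ih hy₃ hz₁, ?_⟩
    calc Av c * (Bv r * y₁) * (sg f * (sg g' * z₁))
        = Av c * (Bv r * (y₁ * (sg f * (sg g' * z₁)))) := by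
          simp only [mul_assoc]
      _ = Av c * (Bv r * (sg f * (y₂ * (sg g' * z₁)))) := by
          rw [reassoc key₂]
      _ = Av c * (Bv r * (sg f * (sg g' * (y₃ * z₁)))) := by
          rw [reassoc key₃]
      _ = Av c * sg f * (Bv (r ᵥ* f) * sg g' * (y₃ * z₁)) := by
          rw [reassoc (M2 f r)]
          simp only [mul_assoc]


/-! ### Reverse-transpose duality -/

/-- reverse-transpose: an anti-automorphism preserving upper/lower unitriangularity -/
def tr (x : Matrix (Fin k) (Fin k) R) : Matrix (Fin k) (Fin k) R :=
  Matrix.of fun i j => x j.rev i.rev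

lemma tr_apply (x : Matrix (Fin k) (Fin k) R) (i j : Fin k) : tr x i j = x j.rev i.rev := rfl

lemma tr_antimul (a b : Matrix (Fin k) (Fin k) R) : tr (a * b) = tr b * tr a := by
  ext i j
  rw [tr_apply, Matrix.mul_apply, Matrix.mul_apply]
  refine (Fintype.sum_equiv (Fin.revPerm) _ _ (fun c => ?_)).symm
  rw [tr_apply, tr_apply]
  simp only [Fin.revPerm_apply, Fin.rev_rev]
  exact mul_comm _ _

lemma tr_one : tr (1 : Matrix (Fin k) (Fin k) R) = 1 := by
  ext i j
  rcases eq_or_ne i j with rfl | hij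
  · rw [tr_apply, Matrix.one_apply_eq, Matrix.one_apply_eq]
  · rw [tr_apply, Matrix.one_apply_ne hij,
      Matrix.one_apply_ne (fun h => hij (by simpa [Fin.rev_inj] using h.symm))]

lemma tr_tr (x : Matrix (Fin k) (Fin k) R) : tr (tr x) = x := by
  ext i j
  rw [tr_apply, tr_apply, Fin.rev_rev, Fin.rev_rev]

lemma tr_isUU {u : Matrix (Fin k) (Fin k) R} (hu : IsUpperUnitriangular u) :
    IsUpperUnitriangular (tr u) := by
  refine ⟨fun i => hu.1 _, fun i j hji => ?_⟩
  exact hu.2 j.rev i.rev (Fin.rev_lt_rev.mpr hji)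

lemma tr_isLU {v : Matrix (Fin k) (Fin k) R} (hv : IsLowerUnitriangular v) :
    IsLowerUnitriangular (tr v) := by
  refine ⟨fun i => hv.1 _, fun i j hij => ?_⟩
  exact hv.2 j.rev i.rev (Fin.rev_lt_rev.mpr hij)

lemma tr_tv (i j : Fin k) (ξ : R) :
    tr (1 + Matrix.single i j ξ) = 1 + Matrix.single j.rev i.rev ξ := by
  ext a b
  rw [tr_apply, Matrix.add_apply, Matrix.add_apply]
  congr 1
  · rcases eq_or_ne a b with rfl | hab
    · rw [Matrix.one_apply_eq, Matrix.one_apply_eq]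
    · rw [Matrix.one_apply_ne (fun h => hab (by simpa [Fin.rev_inj] using h.symm)),
        Matrix.one_apply_ne hab]
  · rcases em (j.rev = a ∧ i.rev = b) with ⟨ha, hb⟩ | hne
    · subst ha; subst hb
      rw [Fin.rev_rev, Fin.rev_rev, Matrix.single_apply_same,
        Matrix.single_apply_same]
    · rw [Matrix.single_apply_of_ne _ _ _ _ _ hne,
        Matrix.single_apply_of_ne _ _ _ _ _ (by
          rintro ⟨rfl, rfl⟩
          exact hne ⟨by rw [Fin.rev_rev], by rw [Fin.rev_rev]⟩)]

lemma two_sided_unique {M : Type*} [Monoid M] {y w W : M}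
    (hwy : w * y = 1) (hyW : y * W = 1) : w = W := by
  rw [← mul_one w, ← hyW, ← mul_assoc, hwy, one_mul]

lemma THY : ∀ {L : ℕ} {y : Matrix (Fin k) (Fin k) R}, y ∈ Yset R k L →
    ∀ {w}, y * w = 1 → w * y = 1 → tr w ∈ Yset R k L := by
  intro L
  induction L with
  | zero =>
    intro y hy w h1 _
    rw [show y = 1 from hy, one_mul] at h1
    rw [h1, tr_one]
    exact rfl
  | succ L ih =>
    rintro y ⟨u, v, y₁, hu, hv, hy₁, rfl⟩ w h1 h2
    obtain ⟨u', hu', hu1, hu2⟩ := invU hu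
    obtain ⟨v', hv', hv1, hv2⟩ := invL hv
    obtain ⟨w₁, _, hw11, hw12⟩ := closure_inv (Yset_sub_closure hy₁)
    have hyW : (u * (v * y₁)) * (w₁ * (v' * u')) = 1 := by
      simp only [mul_assoc]
      rw [← mul_assoc y₁ w₁, hw11, one_mul, ← mul_assoc v v', hv1, one_mul, hu1]
    have hwW : w = w₁ * (v' * u') := two_sided_unique h2 hyW
    rw [hwW, tr_antimul, tr_antimul]
    exact ⟨tr u', tr v', tr w₁, tr_isUU hu', tr_isLU hv', ih hy₁ hw11 hw12,
      by rw [mul_assoc]⟩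

/-! ### Conversions to the `List.ofFn` form -/

lemma Y2F : ∀ {L : ℕ} {y : Matrix (Fin k) (Fin k) R}, y ∈ Yset R k L →
    ∃ u v : Fin L → Matrix (Fin k) (Fin k) R,
      (∀ i, IsUpperUnitriangular (u i)) ∧ (∀ i, IsLowerUnitriangular (v i)) ∧
      y = (List.ofFn fun i => u i * v i).prod := by
  intro L
  induction L with
  | zero =>
    intro y hy
    exact ⟨fun _ => 1, fun _ => 1, fun i => i.elim0, fun i => i.elim0, by
      rw [show y = 1 from hy]; simp⟩
  | succ L ih =>
    rintro y ⟨u₀, v₀, y₁, hu₀, hv₀, hy₁, rfl⟩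
    obtain ⟨u, v, hu, hv, hprod⟩ := ih hy₁
    refine ⟨Fin.cons u₀ u, Fin.cons v₀ v, ?_, ?_, ?_⟩
    · intro i
      induction i using Fin.cases with
      | zero => simpa using hu₀
      | succ i => simpa using hu i
    · intro i
      induction i using Fin.cases with
      | zero => simpa using hv₀
      | succ i => simpa using hv i
    · rw [List.ofFn_succ, List.prod_cons]
      simp only [Fin.cons_zero, Fin.cons_succ]
      rw [← hprod, mul_assoc]

lemma sg_prod_Zset : ∀ {k : ℕ} (u v : Fin k → Matrix (Fin n) (Fin n) R),
    (∀ i, IsUpperUnitriangular (u i)) → (∀ i, IsLowerUnitriangular (v i)) →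
    sg ((List.ofFn fun i => u i * v i).prod) ∈ Zset R n k := by
  intro k
  induction k with
  | zero =>
    intro u v _ _
    rw [show (List.ofFn fun i : Fin 0 => u i * v i) = [] from List.ofFn_zero, List.prod_nil,
      sg_one]
    exact rfl
  | succ k ih =>
    intro u v hu hv
    rw [List.ofFn_succ, List.prod_cons]
    refine ⟨u 0, v 0, sg ((List.ofFn fun i : Fin k => u i.succ * v i.succ).prod),
      hu 0, hv 0, ih _ _ (fun i => hu i.succ) (fun i => hv i.succ), ?_⟩
    rw [← sg_mul, ← sg_mul, mul_assoc]


/-! ### Absorption lemmas -/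

/-- the factorization property at size `k` with `L` factors -/
def FactP (R : Type*) [CommRing R] (L k : ℕ) : Prop :=
  ∀ g ∈ Submonoid.closure (TS k R), ∃ u v : Fin L → Matrix (Fin k) (Fin k) R,
    (∀ i, IsUpperUnitriangular (u i)) ∧ (∀ i, IsLowerUnitriangular (v i)) ∧
    g = (List.ofFn fun i => u i * v i).prod

variable {L : ℕ}

lemma NFY (fact : FactP R L n) {y : Matrix (Fin (n+1)) (Fin (n+1)) R}
    {H : Matrix (Fin n) (Fin n) R} (hy : y ∈ ARset R n L)
    (hH : H ∈ Submonoid.closure (TS n R)) : y * sg H ∈ Yset R (n+1) L := by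
  obtain ⟨u, v, hu, hv, hprod⟩ := fact H hH
  rw [hprod]
  exact interleave hy (sg_prod_Zset u v hu hv)

lemma ABSl (fact : FactP R L n) {h : Matrix (Fin n) (Fin n) R}
    {y : Matrix (Fin (n+1)) (Fin (n+1)) R} (hh : h ∈ Submonoid.closure (TS n R))
    (hy : y ∈ Yset R (n+1) L) : sg h * y ∈ Yset R (n+1) L := by
  obtain ⟨y₁, H, hy₁, hH, rfl⟩ := extract hy
  obtain ⟨w, -, hw1, hw2⟩ := closure_inv hh
  obtain ⟨y₁', hy₁', key⟩ := PASSr hw2 hy₁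
  have heq : sg h * (y₁ * sg H) = y₁' * sg (h * H) := by
    rw [← mul_assoc, key, mul_assoc, ← sg_mul]
  rw [heq]
  exact NFY fact hy₁' (mul_mem hh hH)

lemma ABSr (fact : FactP R L n) {h : Matrix (Fin n) (Fin n) R}
    {y : Matrix (Fin (n+1)) (Fin (n+1)) R} (hh : h ∈ Submonoid.closure (TS n R))
    (hy : y ∈ Yset R (n+1) L) : y * sg h ∈ Yset R (n+1) L := by
  obtain ⟨y₁, H, hy₁, hH, rfl⟩ := extract hy
  rw [mul_assoc, ← sg_mul]
  exact NFY fact hy₁ (mul_mem hH hh)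

lemma tv_block {a b : Fin (n+1)} (ha : a ≠ Fin.last n) (hb : b ≠ Fin.last n)
    (hab : a ≠ b) (ξ : R) :
    ∃ h ∈ Submonoid.closure (TS n R), (1 + Matrix.single a b ξ) = sg h := by
  refine ⟨1 + Matrix.single (a.castPred ha) (b.castPred hb) ξ,
    tv_mem _ _ _ (fun hcc => hab ?_), ?_⟩
  · have := congrArg Fin.castSucc hcc
    rwa [Fin.castSucc_castPred, Fin.castSucc_castPred] at this
  · rw [sg_tv, Fin.castSucc_castPred, Fin.castSucc_castPred]

lemma Lblock_left (fact : FactP R L n) {a b : Fin (n+1)} (ha : a ≠ Fin.last n)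
    (hb : b ≠ Fin.last n) (hab : a ≠ b) (ξ : R) {y : Matrix (Fin (n+1)) (Fin (n+1)) R}
    (hy : y ∈ Yset R (n+1) L) : (1 + Matrix.single a b ξ) * y ∈ Yset R (n+1) L := by
  obtain ⟨h, hh, heq⟩ := tv_block ha hb hab ξ
  rw [heq]
  exact ABSl fact hh hy

lemma Rblock_right (fact : FactP R L n) {a b : Fin (n+1)} (ha : a ≠ Fin.last n)
    (hb : b ≠ Fin.last n) (hab : a ≠ b) (ξ : R) {y : Matrix (Fin (n+1)) (Fin (n+1)) R}
    (hy : y ∈ Yset R (n+1) L) : y * (1 + Matrix.single a b ξ) ∈ Yset R (n+1) L := by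
  obtain ⟨h, hh, heq⟩ := tv_block ha hb hab ξ
  rw [heq]
  exact ABSr fact hh hy

/-! ### The θ-reduction -/

lemma THETA_right (fact : FactP R L n) {x x' : Matrix (Fin (n+1)) (Fin (n+1)) R}
    {h : Matrix (Fin n) (Fin n) R} (hxx' : x * x' = 1) (hx'x : x' * x = 1)
    (hh : h ∈ Submonoid.closure (TS n R)) (htr : tr x' = sg h)
    {y : Matrix (Fin (n+1)) (Fin (n+1)) R} (hy : y ∈ Yset R (n+1) L) :
    y * x ∈ Yset R (n+1) L := by
  obtain ⟨w, -, hw1, hw2⟩ := closure_inv (Yset_sub_closure hy)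
  have z₀ : tr w ∈ Yset R (n+1) L := THY hy hw1 hw2
  have z₁mem : tr w * sg h ∈ Yset R (n+1) L := ABSr fact hh z₀
  have hz₁ : tr w * sg h = tr (x' * w) := by rw [tr_antimul, htr]
  obtain ⟨wz, -, hz1, hz2⟩ := closure_inv (Yset_sub_closure z₁mem)
  have hback : tr (tr w * sg h) = x' * w := by rw [hz₁, tr_tr]
  have h3 : (x' * w) * tr wz = 1 := by
    calc (x' * w) * tr wz = tr (tr w * sg h) * tr wz := by rw [hback]
      _ = tr (wz * (tr w * sg h)) := (tr_antimul _ _).symm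
      _ = 1 := by rw [hz2, tr_one]
  have hP2 : (y * x) * (x' * w) = 1 := by
    rw [mul_assoc, ← mul_assoc x, hxx', one_mul, hw1]
  have hfin : y * x = tr wz := two_sided_unique hP2 h3
  rw [hfin]
  exact THY z₁mem hz1 hz2

lemma THETA_left (fact : FactP R L n) {x x' : Matrix (Fin (n+1)) (Fin (n+1)) R}
    {h : Matrix (Fin n) (Fin n) R} (hxx' : x * x' = 1) (hx'x : x' * x = 1)
    (hh : h ∈ Submonoid.closure (TS n R)) (htr : tr x' = sg h)
    {y : Matrix (Fin (n+1)) (Fin (n+1)) R} (hy : y ∈ Yset R (n+1) L) :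
    x * y ∈ Yset R (n+1) L := by
  obtain ⟨w, -, hw1, hw2⟩ := closure_inv (Yset_sub_closure hy)
  have z₀ : tr w ∈ Yset R (n+1) L := THY hy hw1 hw2
  have z₁mem : sg h * tr w ∈ Yset R (n+1) L := ABSl fact hh z₀
  have hz₁ : sg h * tr w = tr (w * x') := by rw [tr_antimul, htr]
  obtain ⟨wz, -, hz1, hz2⟩ := closure_inv (Yset_sub_closure z₁mem)
  have hback : tr (sg h * tr w) = w * x' := by rw [hz₁, tr_tr]
  have h3 : (w * x') * tr wz = 1 := by
    calc (w * x') * tr wz = tr (sg h * tr w) * tr wz := by rw [hback]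
      _ = tr (wz * (sg h * tr w)) := (tr_antimul _ _).symm
      _ = 1 := by rw [hz2, tr_one]
  have hP2 : (x * y) * (w * x') = 1 := by
    rw [mul_assoc, ← mul_assoc y, hw1, one_mul, hxx']
  have hfin : x * y = tr wz := two_sided_unique hP2 h3
  rw [hfin]
  exact THY z₁mem hz1 hz2

lemma rev_ne_last {a : Fin (n+1)} (ha : a ≠ 0) : a.rev ≠ Fin.last n := by
  intro h
  apply ha
  have := congrArg Fin.rev h
  rwa [Fin.rev_rev, Fin.rev_last] at this

lemma rev_ne_zero {a : Fin (n+1)} (ha : a ≠ Fin.last n) : a.rev ≠ 0 := by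
  intro h
  apply ha
  have := congrArg Fin.rev h
  rwa [Fin.rev_rev, Fin.rev_zero] at this

lemma zero_ne_last (hn : 1 ≤ n) : (0 : Fin (n+1)) ≠ Fin.last n := by
  intro h
  have := congrArg Fin.val h
  simp [Fin.last] at this
  omega

lemma Rup_rad (fact : FactP R L n) (hn : 1 ≤ n) {i : Fin (n+1)} (hi0 : i ≠ 0)
    (hil : i ≠ Fin.last n) (ξ : R) {y : Matrix (Fin (n+1)) (Fin (n+1)) R}
    (hy : y ∈ Yset R (n+1) L) :
    y * (1 + Matrix.single i (Fin.last n) ξ) ∈ Yset R (n+1) L := by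
  have htr : tr (1 + Matrix.single i (Fin.last n) (-ξ))
      = 1 + Matrix.single (Fin.last n).rev i.rev (-ξ) := tr_tv _ _ _
  rw [Fin.rev_last] at htr
  obtain ⟨h, hh, heq⟩ := tv_block (zero_ne_last hn) (rev_ne_last hi0)
    (Ne.symm (rev_ne_zero hil)) (-ξ)
  exact THETA_right fact (tv_mul_tv i (Fin.last n) ξ hil) (by simpa using tv_mul_tv i (Fin.last n) (-ξ) hil)
    hh (by rw [htr, heq]) hy

lemma Llow_rad (fact : FactP R L n) (hn : 1 ≤ n) {j : Fin (n+1)} (hj0 : j ≠ 0)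
    (hjl : j ≠ Fin.last n) (ξ : R) {y : Matrix (Fin (n+1)) (Fin (n+1)) R}
    (hy : y ∈ Yset R (n+1) L) :
    (1 + Matrix.single (Fin.last n) j ξ) * y ∈ Yset R (n+1) L := by
  have htr : tr (1 + Matrix.single (Fin.last n) j (-ξ))
      = 1 + Matrix.single j.rev (Fin.last n).rev (-ξ) := tr_tv _ _ _
  rw [Fin.rev_last] at htr
  obtain ⟨h, hh, heq⟩ := tv_block (rev_ne_last hj0) (zero_ne_last hn)
    (rev_ne_zero hjl) (-ξ)
  exact THETA_left fact (tv_mul_tv (Fin.last n) j ξ (Ne.symm hjl))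
    (by simpa using tv_mul_tv (Fin.last n) j (-ξ) (Ne.symm hjl))
    hh (by rw [htr, heq]) hy


/-! ### Corner commutator identity -/

lemma std_neg (i j : Fin k) (a : R) :
    Matrix.single i j (-a) = -(Matrix.single i j a) := by
  ext x y
  rw [Matrix.neg_apply]
  rcases em (i = x ∧ j = y) with ⟨rfl, rfl⟩ | hne
  · rw [Matrix.single_apply_same, Matrix.single_apply_same]
  · rw [Matrix.single_apply_of_ne _ _ _ _ _ hne,
      Matrix.single_apply_of_ne _ _ _ _ _ hne, neg_zero]

lemma comm_id (i j p : Fin k) (hij : i ≠ j) (hpi : p ≠ i) (hjp : j ≠ p) (ξ : R) :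
    (1 + Matrix.single i p ξ) * ((1 + Matrix.single p j (1 : R)) *
      ((1 + Matrix.single i p (-ξ)) * (1 + Matrix.single p j (-1 : R))))
    = 1 + Matrix.single i j ξ := by
  have z1 : ∀ a b : R, Matrix.single i p a * Matrix.single i p b = 0 :=
    fun a b => Matrix.single_mul_single_of_ne _ _ _ _ hpi _
  have z2 : ∀ a b : R, Matrix.single p j a * Matrix.single p j b = 0 :=
    fun a b => Matrix.single_mul_single_of_ne _ _ _ _ hjp _
  have z3 : ∀ a b : R, Matrix.single p j a * Matrix.single i p b = 0 :=
    fun a b => Matrix.single_mul_single_of_ne _ _ _ _ (Ne.symm hij) _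
  have z4 : ∀ a b : R, Matrix.single p j a * Matrix.single i j b = 0 :=
    fun a b => Matrix.single_mul_single_of_ne _ _ _ _ (Ne.symm hij) _
  have z5 : ∀ a b : R, Matrix.single i p a * Matrix.single i j b = 0 :=
    fun a b => Matrix.single_mul_single_of_ne _ _ _ _ hpi _
  have s1 : ∀ a b : R, Matrix.single i p a * Matrix.single p j b
      = Matrix.single i j (a * b) :=
    fun a b => Matrix.single_mul_single_same _ _ _ _ _
  simp only [mul_add, add_mul, mul_one, one_mul, mul_assoc, s1, z1, z2, z3, z4, z5,
    zero_mul, mul_zero, add_zero, zero_add, neg_mul_neg, neg_mul, mul_neg, neg_neg]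
  simp only [std_neg]
  abel

/-! ### The corner generators -/

lemma Lcorner (fact : FactP R L n) (hn : 2 ≤ n) (ξ : R)
    {y : Matrix (Fin (n+1)) (Fin (n+1)) R} (hy : y ∈ Yset R (n+1) L) :
    (1 + Matrix.single (Fin.last n) (0 : Fin (n+1)) ξ) * y ∈ Yset R (n+1) L := by
  set p : Fin (n+1) := ⟨1, by omega⟩ with hp
  have hp0 : p ≠ 0 := by simp [hp, Fin.ext_iff]
  have hpl : p ≠ Fin.last n := by simp [hp, Fin.ext_iff, Fin.last]; omega
  have h0l : (0 : Fin (n+1)) ≠ Fin.last n := zero_ne_last (by omega)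
  rw [← comm_id (Fin.last n) (0 : Fin (n+1)) p (Ne.symm h0l) hpl (Ne.symm hp0) ξ]
  rw [show (1 + Matrix.single (Fin.last n) p ξ) *
      ((1 + Matrix.single p (0 : Fin (n+1)) (1 : R)) *
        ((1 + Matrix.single (Fin.last n) p (-ξ)) *
          (1 + Matrix.single p (0 : Fin (n+1)) (-1 : R)))) * y
      = (1 + Matrix.single (Fin.last n) p ξ) *
        ((1 + Matrix.single p (0 : Fin (n+1)) (1 : R)) *
          ((1 + Matrix.single (Fin.last n) p (-ξ)) *
            ((1 + Matrix.single p (0 : Fin (n+1)) (-1 : R)) * y)))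
    from by simp only [mul_assoc]]
  exact Llow_rad fact (by omega) hp0 hpl ξ
    (Lblock_left fact hpl h0l hp0 (1 : R)
      (Llow_rad fact (by omega) hp0 hpl (-ξ)
        (Lblock_left fact hpl h0l hp0 (-1 : R) hy)))

lemma Rcorner (fact : FactP R L n) (hn : 2 ≤ n) (ξ : R)
    {y : Matrix (Fin (n+1)) (Fin (n+1)) R} (hy : y ∈ Yset R (n+1) L) :
    y * (1 + Matrix.single (0 : Fin (n+1)) (Fin.last n) ξ) ∈ Yset R (n+1) L := by
  set p : Fin (n+1) := ⟨1, by omega⟩ with hp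
  have hp0 : p ≠ 0 := by simp [hp, Fin.ext_iff]
  have hpl : p ≠ Fin.last n := by simp [hp, Fin.ext_iff, Fin.last]; omega
  have h0l : (0 : Fin (n+1)) ≠ Fin.last n := zero_ne_last (by omega)
  rw [← comm_id (0 : Fin (n+1)) (Fin.last n) p h0l hp0 (Ne.symm hpl) ξ]
  rw [show y * ((1 + Matrix.single (0 : Fin (n+1)) p ξ) *
      ((1 + Matrix.single p (Fin.last n) (1 : R)) *
        ((1 + Matrix.single (0 : Fin (n+1)) p (-ξ)) *
          (1 + Matrix.single p (Fin.last n) (-1 : R)))))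
      = (((y * (1 + Matrix.single (0 : Fin (n+1)) p ξ)) *
          (1 + Matrix.single p (Fin.last n) (1 : R))) *
            (1 + Matrix.single (0 : Fin (n+1)) p (-ξ))) *
              (1 + Matrix.single p (Fin.last n) (-1 : R))
    from by simp only [mul_assoc]]
  exact Rup_rad fact (by omega) hp0 hpl (-1 : R)
    (Rblock_right fact h0l hpl (Ne.symm hp0) (-ξ)
      (Rup_rad fact (by omega) hp0 hpl (1 : R)
        (Rblock_right fact h0l hpl (Ne.symm hp0) ξ hy)))

/-! ### The induction step -/

lemma gen_left (fact : FactP R L n) (hL : L ≠ 0) (hn : 2 ≤ n)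
    {i j : Fin (n+1)} (hij : i ≠ j) (ξ : R)
    {y : Matrix (Fin (n+1)) (Fin (n+1)) R} (hy : y ∈ Yset R (n+1) L) :
    (1 + Matrix.single i j ξ) * y ∈ Yset R (n+1) L := by
  rcases lt_or_gt_of_ne hij with hlt | hgt
  · exact leftU hL (tv_isUU hlt ξ) hy
  · by_cases hi : i = Fin.last n
    · subst hi
      by_cases hj0 : j = 0
      · subst hj0
        exact Lcorner fact hn ξ hy
      · exact Llow_rad fact (by omega) hj0 (ne_of_lt hgt) ξ hy
    · have hj : j ≠ Fin.last n := fun h => (not_lt.mpr (Fin.le_last i)) (h ▸ hgt)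
      exact Lblock_left fact hi hj hij ξ hy

lemma gen_right (fact : FactP R L n) (hL : L ≠ 0) (hn : 2 ≤ n)
    {i j : Fin (n+1)} (hij : i ≠ j) (ξ : R)
    {y : Matrix (Fin (n+1)) (Fin (n+1)) R} (hy : y ∈ Yset R (n+1) L) :
    y * (1 + Matrix.single i j ξ) ∈ Yset R (n+1) L := by
  rcases lt_or_gt_of_ne hij with hlt | hgt
  · by_cases hj : j = Fin.last n
    · subst hj
      by_cases hi0 : i = 0
      · subst hi0
        exact Rcorner fact hn ξ hy
      · exact Rup_rad fact (by omega) hi0 (ne_of_lt hlt) ξ hy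
    · have hi : i ≠ Fin.last n := fun h => (not_lt.mpr (Fin.le_last j)) (h ▸ hlt)
      exact Rblock_right fact hi hj hij ξ hy
  · exact rightL hL (tv_isLU hgt ξ) hy

lemma stepP (hL : L ≠ 0) (hn : 2 ≤ n) (fact : FactP R L n) : FactP R L (n+1) := by
  intro g hg
  have hT : ∀ z ∈ Submonoid.closure (TS (n+1) R),
      ∀ y ∈ Yset R (n+1) L, z * y ∈ Yset R (n+1) L ∧ y * z ∈ Yset R (n+1) L := by
    intro z hz
    induction hz using Submonoid.closure_induction with
    | mem x hx =>
      obtain ⟨i, j, ξ, hij, rfl⟩ := hx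
      intro y hy
      exact ⟨gen_left fact hL hn hij ξ hy, gen_right fact hL hn hij ξ hy⟩
    | one => intro y hy; rw [one_mul, mul_one]; exact ⟨hy, hy⟩
    | mul a b _ _ iha ihb =>
      intro y hy
      constructor
      · rw [mul_assoc]
        exact (iha _ ((ihb y hy).1)).1
      · rw [← mul_assoc]
        exact (ihb _ ((iha y hy).2)).2
  have hgY : g ∈ Yset R (n+1) L := by
    have := (hT g hg 1 (one_Yset L)).1
    rwa [mul_one] at this
  exact Y2F hgY

end StabAux

/-- If `SL(m,R) = (U·U⁻)^L`, then for every `n ≥ m` the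
elementary group `E(n,R)` (generated by elementary transvections) satisfies
`E(n,R) = (U·U⁻)^L`, with the same number of factors. -/
theorem stability_of_unitriangular_factorisation
    (R : Type*) [CommRing R] (m L : ℕ) (hm : 2 ≤ m)
    (hSL : ∀ g : Matrix (Fin m) (Fin m) R, g.det = 1 →
      ∃ u v : Fin L → Matrix (Fin m) (Fin m) R,
        (∀ i, IsUpperUnitriangular (u i)) ∧ (∀ i, IsLowerUnitriangular (v i)) ∧
        g = (List.ofFn fun i => u i * v i).prod)
    (n : ℕ) (hn : m ≤ n) (g : Matrix (Fin n) (Fin n) R)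
    (hg : g ∈ Submonoid.closure {M : Matrix (Fin n) (Fin n) R |
      ∃ (i j : Fin n) (ξ : R), i ≠ j ∧ M = 1 + Matrix.single i j ξ}) :
    ∃ u v : Fin L → Matrix (Fin n) (Fin n) R,
      (∀ i, IsUpperUnitriangular (u i)) ∧ (∀ i, IsLowerUnitriangular (v i)) ∧
      g = (List.ofFn fun i => u i * v i).prod := by
  rcases Nat.eq_zero_or_pos L with rfl | hLpos
  · -- the hypothesis for `L = 0` forces `R` to be trivial
    have hne : (⟨0, by omega⟩ : Fin m) ≠ (⟨1, by omega⟩ : Fin m) := by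
      intro h
      simpa using congrArg Fin.val h
    have hwmem : (1 + Matrix.single (⟨0, by omega⟩ : Fin m) (⟨1, by omega⟩ : Fin m)
        (1 : R)) ∈ Submonoid.closure (StabAux.TS m R) := StabAux.tv_mem _ _ _ hne
    obtain ⟨u, v, -, -, hprod⟩ := hSL _ (StabAux.det_closure hwmem)
    have hw1 : (1 + Matrix.single (⟨0, by omega⟩ : Fin m) (⟨1, by omega⟩ : Fin m)
        (1 : R)) = 1 := by
      rw [hprod]
      simp
    have h10 : (1 : R) = 0 := by
      have hcc := congrFun (congrFun hw1 ⟨0, by omega⟩) ⟨1, by omega⟩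
      rw [Matrix.add_apply, Matrix.one_apply_ne hne, Matrix.single_apply_same] at hcc
      simpa using hcc
    haveI : Subsingleton R := subsingleton_of_zero_eq_one h10.symm
    refine ⟨fun _ => 1, fun _ => 1, fun _ => StabAux.isUU_one, fun _ => StabAux.isLU_one, ?_⟩
    apply Matrix.ext
    intro a b
    exact Subsingleton.elim _ _
  · have hL : L ≠ 0 := hLpos.ne'
    have fact : ∀ k, m ≤ k → StabAux.FactP R L k := by
      intro k hk
      induction k, hk using Nat.le_induction with
      | base => exact fun g hg => hSL g (StabAux.det_closure hg)
      | succ k hk ih => exact StabAux.stepP hL (le_trans hm hk) ih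
    exact fact n hn g hg
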